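/- Let G and H be connected finite simple graphs, where G has minimum degree d ≥ 1 and H has maximum degree Δ(H) ≥ d. Let S ⊆ V(H) be a maximum G-free subset of V(H); among all maximum G-free subsets, suppose S is chosen so that the induced subgraph H∖S has as few connected (Δ(H)−d)-regular subgraphs as possible, and subject to that, so that H[S] has the minimum possible number of connected components. If H∖S has a connected (Δ(H)−d)-regular subgraph H_0, then for every vertex v ∈ V(H_0) the induced subgraph H[S ∪ {v}] contains exactly one copy of G (i.e., a unique subgraph isomorphic to G), and this copy is a d-regular connected component of H[S ∪ {v}]. -/

import Mathlib

open SimpleGraph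

/-- `H` contains a subgraph isomorphic to `G`, i.e. there is an injective graph
homomorphism from `G` to `H`. -/
def HasCopy {α β : Type*} (G : SimpleGraph α) (H : SimpleGraph β) : Prop :=
  ∃ f : G →g H, Function.Injective f

/-- `S` is a `G`-free subset of the vertices of `H` of maximum cardinality. -/
def MaxFreeSubset {α V : Type*} (G : SimpleGraph α) (H : SimpleGraph V) (S : Set V) :
    Prop :=
  ¬ HasCopy G (H.induce S) ∧
    ∀ T : Set V, ¬ HasCopy G (H.induce T) → T.ncard ≤ S.ncard

/-- `H'` is a connected `r`-regular subgraph of `H ∖ S` (the subgraph of `H` induced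
on the complement of `S`). -/
def IsRegConnSubgraphOff {V : Type*} (H : SimpleGraph V) (S : Set V) (r : ℕ)
    (H' : H.Subgraph) : Prop :=
  H'.verts ⊆ Sᶜ ∧ H'.Connected ∧ ∀ v ∈ H'.verts, (H'.neighborSet v).ncard = r

/-- The number of connected `r`-regular subgraphs of `H ∖ S`. -/
noncomputable def regCount {V : Type*} (H : SimpleGraph V) (S : Set V) (r : ℕ) : ℕ :=
  {H' : H.Subgraph | IsRegConnSubgraphOff H S r H'}.ncard

/-- The number of connected components of the induced subgraph `H[S]`. -/
noncomputable def compCount {V : Type*} (H : SimpleGraph V) (S : Set V) : ℕ :=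
  Nat.card (H.induce S).ConnectedComponent

/-- `K` is a copy of `G` inside `H[W]`: a subgraph of `H` whose vertices lie in `W`
and which is isomorphic to `G`. -/
def IsCopyIn {α V : Type*} (G : SimpleGraph α) (H : SimpleGraph V) (W : Set V)
    (K : H.Subgraph) : Prop :=
  K.verts ⊆ W ∧ Nonempty (K.coe ≃g G)

lemma exists_copy_of_hasCopy {α V : Type*} {G : SimpleGraph α} {H : SimpleGraph V} {W : Set V}
    (h : HasCopy G (H.induce W)) : ∃ K : H.Subgraph, IsCopyIn G H W K := by
  obtain ⟨f, hf⟩ := h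
  let f' : G →g H := ⟨fun a => (f a).1, fun h => f.map_rel h⟩
  have hf' : Function.Injective f' := fun a b h => hf (Subtype.ext h)
  refine ⟨SimpleGraph.Subgraph.map f' ⊤, ?_, ?_⟩
  · intro x hx
    obtain ⟨a, -, rfl⟩ := hx
    exact (f a).2
  · have hbij : Function.Bijective
        (fun a => (⟨f' a, ⟨a, trivial, rfl⟩⟩ : (SimpleGraph.Subgraph.map f' ⊤).verts)) := by
      constructor
      · intro a b h
        simp only [Subtype.mk.injEq] at h
        exact hf' (congrArg (fun x : (SimpleGraph.Subgraph.map f' ⊤).verts => (x : V)) h)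
      · rintro ⟨x, a, -, rfl⟩
        exact ⟨a, rfl⟩
    refine ⟨(RelIso.mk (Equiv.ofBijective _ hbij) ?_ :
        G ≃g (SimpleGraph.Subgraph.map f' ⊤).coe).symm⟩
    intro a b
    simp only [Equiv.ofBijective_apply, Subgraph.coe_adj, Subgraph.map_adj]
    constructor
    · rintro ⟨a', b', hab, ha, hb⟩
      rw [hf' ha, hf' hb] at hab
      exact hab
    · intro h
      exact ⟨a, b, by simpa using h, rfl, rfl⟩

lemma hasCopy_of_isCopyIn {α V : Type*} {G : SimpleGraph α} {H : SimpleGraph V} {W : Set V}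
    {K : H.Subgraph} (h : IsCopyIn G H W K) : HasCopy G (H.induce W) := by
  obtain ⟨hsub, ⟨e⟩⟩ := h
  refine ⟨⟨fun a => ⟨(e.symm a).1, hsub (e.symm a).2⟩, ?_⟩, ?_⟩
  · intro a b hab
    have : K.coe.Adj (e.symm a) (e.symm b) := e.symm.map_rel_iff.mpr hab
    exact K.adj_sub this
  · intro a b hab
    have hab' : (⟨(e.symm a).1, hsub (e.symm a).2⟩ : W) = ⟨(e.symm b).1, hsub (e.symm b).2⟩ := hab
    simp only [Subtype.mk.injEq] at hab'
    exact e.symm.injective (Subtype.ext hab')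

lemma ncard_neighborSet_eq_degree' {V : Type*} [Fintype V] (H : SimpleGraph V)
    [DecidableRel H.Adj] (v : V) : (H.neighborSet v).ncard = H.degree v := by
  rw [← SimpleGraph.card_neighborSet_eq_degree, Set.ncard_eq_toFinset_card']
  exact Set.toFinset_card _

lemma minDegree_le_copy_deg {α V : Type*} [Fintype α] (G : SimpleGraph α) [DecidableRel G.Adj]
    {H : SimpleGraph V} {K : H.Subgraph} (e : K.coe ≃g G) (a : V) (ha : a ∈ K.verts) :
    G.minDegree ≤ (K.neighborSet a).ncard := by
  have h1 : (K.neighborSet a).ncard = Nat.card (K.coe.neighborSet ⟨a, ha⟩) := by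
    rw [← Nat.card_coe_set_eq]
    exact (Nat.card_congr (SimpleGraph.Subgraph.coeNeighborSetEquiv ⟨a, ha⟩)).symm
  have h2 : Nat.card (K.coe.neighborSet ⟨a, ha⟩) = Nat.card (G.neighborSet (e ⟨a, ha⟩)) :=
    Nat.card_congr (e.mapNeighborSet ⟨a, ha⟩)
  have h3 : Nat.card (G.neighborSet (e ⟨a, ha⟩)) = G.degree (e ⟨a, ha⟩) := by
    rw [Nat.card_coe_set_eq, ncard_neighborSet_eq_degree']
  rw [h1, h2, h3]
  exact G.minDegree_le_degree _

lemma copy_connected' {α V : Type*} {G : SimpleGraph α} (hG : G.Connected)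
    {H : SimpleGraph V} {K : H.Subgraph} (e : K.coe ≃g G) : K.Connected := by
  rw [SimpleGraph.Subgraph.connected_iff']
  exact hG.map e.symm.toHom e.symm.toEquiv.surjective

lemma nbr_inter_bound {V : Type*} [Fintype V] (H : SimpleGraph V) [DecidableRel H.Adj]
    {d : ℕ} (hd : d ≤ H.maxDegree) (X : Set V) (w : V) (B : Set V)
    (hB : B ⊆ H.neighborSet w) (hBX : ∀ x ∈ B, x ∉ X)
    (hBcard : B.ncard = H.maxDegree - d) : (H.neighborSet w ∩ X).ncard ≤ d := by
  have hdisj : Disjoint (H.neighborSet w ∩ X) B := by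
    rw [Set.disjoint_left]
    rintro x ⟨-, hx2⟩ hxB
    exact hBX x hxB hx2
  have hsub : (H.neighborSet w ∩ X) ∪ B ⊆ H.neighborSet w :=
    Set.union_subset Set.inter_subset_left hB
  have h1 : (H.neighborSet w ∩ X).ncard + B.ncard ≤ H.maxDegree := by
    rw [← Set.ncard_union_eq hdisj (Set.toFinite _) (Set.toFinite _)]
    calc ((H.neighborSet w ∩ X) ∪ B).ncard ≤ (H.neighborSet w).ncard :=
          Set.ncard_le_ncard hsub (Set.toFinite _)
      _ = H.degree w := ncard_neighborSet_eq_degree' H w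
      _ ≤ H.maxDegree := H.degree_le_maxDegree w
  omega

instance subgraphFinite {V : Type*} [Finite V] (H : SimpleGraph V) : Finite H.Subgraph := by
  have : Finite (Set V × (V → V → Prop)) := by infer_instance
  exact Finite.of_injective (fun K => (K.verts, K.Adj)) (by
    intro a b h
    simp only [Prod.mk.injEq] at h
    exact SimpleGraph.Subgraph.ext h.1 h.2)

/-- **Lemma (part (b)).**  With `S` as in part (a), if `H₀` is a connected
`(Δ(H) - d)`-regular subgraph of `H ∖ S`, then for every vertex `v` of `H₀` the induced
subgraph `H[S ∪ {v}]` contains a *unique* copy of `G`, and this copy is a `d`-regular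
connected component of `H[S ∪ {v}]`. -/
theorem unique_copy_is_regular_component
    {α : Type*} [Fintype α] (G : SimpleGraph α) [DecidableRel G.Adj]
    {V : Type*} [Fintype V] (H : SimpleGraph V) [DecidableRel H.Adj]
    (hGconn : G.Connected) (hHconn : H.Connected)
    (hd : 1 ≤ G.minDegree) (hΔd : G.minDegree ≤ H.maxDegree)
    (S : Set V) (hS : MaxFreeSubset G H S)
    (hreg : ∀ T : Set V, MaxFreeSubset G H T →
      regCount H S (H.maxDegree - G.minDegree) ≤ regCount H T (H.maxDegree - G.minDegree))
    (hcomp : ∀ T : Set V, MaxFreeSubset G H T →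
      regCount H T (H.maxDegree - G.minDegree) = regCount H S (H.maxDegree - G.minDegree) →
      compCount H S ≤ compCount H T)
    (H₀ : H.Subgraph) (hH₀ : IsRegConnSubgraphOff H S (H.maxDegree - G.minDegree) H₀) :
    ∀ v ∈ H₀.verts, ∃ K : H.Subgraph,
      IsCopyIn G H (insert v S) K ∧
      (∀ K' : H.Subgraph, IsCopyIn G H (insert v S) K' → K' = K) ∧
      K.Connected ∧
      K.IsInduced ∧
      (∀ a ∈ K.verts, ∀ b ∈ insert v S, H.Adj a b → b ∈ K.verts) ∧
      (∀ a ∈ K.verts, (K.neighborSet a).ncard = G.minDegree) := by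
  intro v hv
  classical
  have hvS : v ∉ S := hH₀.1 hv
  -- Step 1 : a copy exists in insert v S
  have hex : ∃ K, IsCopyIn G H (insert v S) K := by
    apply exists_copy_of_hasCopy
    by_contra hfree
    have h1 := hS.2 _ hfree
    rw [Set.ncard_insert_of_notMem hvS (Set.toFinite S)] at h1
    omega
  -- Step 2 : every copy contains v
  have hvcopy : ∀ K : H.Subgraph, IsCopyIn G H (insert v S) K → v ∈ K.verts := by
    intro K hK
    by_contra hvK
    apply hS.1
    apply hasCopy_of_isCopyIn (W := S) (K := K)
    refine ⟨?_, hK.2⟩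
    intro x hx
    rcases hK.1 hx with h | h
    · exact absurd (h ▸ hx) hvK
    · exact h
  set P : Set V := {w | ∀ K : H.Subgraph, IsCopyIn G H (insert v S) K → w ∈ K.verts} with hPdef
  have hPsub : P ⊆ insert v S := by
    obtain ⟨K0, hK0⟩ := hex
    intro w hw
    exact hK0.1 (hw K0 hK0)
  have hvP : v ∈ P := hvcopy
  -- Step 3 : key neighbour bound
  have key : ∀ w ∈ P, (H.neighborSet w ∩ insert v S).ncard ≤ G.minDegree := by
    intro w hw
    rcases hPsub hw with rfl | hwS
    · -- w = v : use H₀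
      refine nbr_inter_bound H hΔd _ _ (H₀.neighborSet w) (H₀.neighborSet_subset w) ?_
        (hH₀.2.2 w hv)
      intro x hx hxmem
      have hxV : x ∈ H₀.verts := H₀.neighborSet_subset_verts w hx
      have hxS : x ∉ S := hH₀.1 hxV
      have hxw : x ≠ w := fun h => (H.irrefl (h ▸ (H₀.adj_sub hx)))
      rcases hxmem with h | h
      · exact hxw h
      · exact hxS h
    · -- w ∈ S : the swapping argument
      have hwv : w ≠ v := fun h => hvS (h ▸ hwS)
      set S' : Set V := insert v S \ {w} with hS'def
      have hvS' : v ∈ S' := ⟨Set.mem_insert v S, fun h => hwv (by simpa using h.symm)⟩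
      have hS'max : MaxFreeSubset G H S' := by
        constructor
        · intro hcop
          obtain ⟨K', hK'⟩ := exists_copy_of_hasCopy hcop
          have hsub2 : IsCopyIn G H (insert v S) K' :=
            ⟨hK'.1.trans Set.diff_subset, hK'.2⟩
          have hwmem : w ∈ K'.verts := hw K' hsub2
          exact (hK'.1 hwmem).2 rfl
        · intro T hT
          refine (hS.2 T hT).trans ?_
          have h1 : S'.ncard = S.ncard := by
            rw [hS'def, Set.ncard_diff_singleton_of_mem (Set.mem_insert_of_mem v hwS),
              Set.ncard_insert_of_notMem hvS (Set.toFinite S)]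
            omega
          omega
        
      have hcount : ({H' : H.Subgraph | IsRegConnSubgraphOff H S
            (H.maxDegree - G.minDegree) H'}).ncard ≤
          ({H' : H.Subgraph | IsRegConnSubgraphOff H S' (H.maxDegree - G.minDegree) H'}).ncard :=
        hreg S' hS'max
      set A := {H' : H.Subgraph | IsRegConnSubgraphOff H S (H.maxDegree - G.minDegree) H'}
        with hAdef
      set B := {H' : H.Subgraph | IsRegConnSubgraphOff H S' (H.maxDegree - G.minDegree) H'}
        with hBdef
      set Mv : Set H.Subgraph := {H' | v ∈ H'.verts} with hMvdef
      set Mw : Set H.Subgraph := {H' | w ∈ H'.verts} with hMwdef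
      have hAB : A \ Mv = B \ Mw := by
        ext H'
        simp only [hAdef, hBdef, hMvdef, hMwdef, Set.mem_diff, Set.mem_setOf_eq]
        constructor
        · rintro ⟨⟨h1, h2, h3⟩, hvnot⟩
          refine ⟨⟨?_, h2, h3⟩, fun hwin => (h1 hwin) hwS⟩
          intro x hx
          have hxS : x ∉ S := h1 hx
          have hxv : x ≠ v := fun h => hvnot (h ▸ hx)
          intro hxS'
          rcases hxS'.1 with h | h
          · exact hxv h
          · exact hxS h
        · rintro ⟨⟨h1, h2, h3⟩, hwnot⟩
          refine ⟨⟨?_, h2, h3⟩, fun hvin => (h1 hvin) hvS'⟩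
          intro x hx
          have hxS' : x ∉ S' := h1 hx
          have hxw : x ≠ w := fun h => hwnot (h ▸ hx)
          intro hxS
          exact hxS' ⟨Set.mem_insert_of_mem v hxS, fun h => hxw (by simpa using h)⟩
      have hsplitA : (A \ Mv).ncard + (A ∩ Mv).ncard = A.ncard := by
        rw [← Set.diff_self_inter]
        exact Set.ncard_diff_add_ncard_of_subset Set.inter_subset_left (Set.toFinite _)
      have hsplitB : (B \ Mw).ncard + (B ∩ Mw).ncard = B.ncard := by
        rw [← Set.diff_self_inter]
        exact Set.ncard_diff_add_ncard_of_subset Set.inter_subset_left (Set.toFinite _)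
      have hAvpos : 0 < (A ∩ Mv).ncard := by
        rw [Set.ncard_pos (Set.toFinite _)]
        exact ⟨H₀, hH₀, hv⟩
      have hBw : (B ∩ Mw).Nonempty := by
        rw [← Set.ncard_pos (Set.toFinite _)]
        rw [hAB] at hsplitA
        omega
      obtain ⟨H₁, hH₁B, hH₁w⟩ := hBw
      refine nbr_inter_bound H hΔd _ _ (H₁.neighborSet w) (H₁.neighborSet_subset w) ?_
        (hH₁B.2.2 w hH₁w)
      intro x hx hxmem
      have hxV : x ∈ H₁.verts := H₁.neighborSet_subset_verts w hx
      have hxS' : x ∉ S' := hH₁B.1 hxV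
      have hxw : x ≠ w := fun h => (H.irrefl (h ▸ (H₁.adj_sub hx)))
      exact hxS' ⟨hxmem, fun h => hxw (by simpa using h)⟩
  -- Step 4 : in every copy, the neighbourhood of a vertex of P is exact
  have key2 : ∀ w ∈ P, ∀ K : H.Subgraph, IsCopyIn G H (insert v S) K →
      K.neighborSet w = H.neighborSet w ∩ insert v S ∧
      (K.neighborSet w).ncard = G.minDegree := by
    intro w hw K hK
    obtain ⟨hKsub, ⟨e⟩⟩ := id hK
    have hwK : w ∈ K.verts := hw K hK
    have hsub : K.neighborSet w ⊆ H.neighborSet w ∩ insert v S := by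
      intro x hx
      exact ⟨K.adj_sub hx, hKsub (K.neighborSet_subset_verts w hx)⟩
    have hlow : G.minDegree ≤ (K.neighborSet w).ncard := minDegree_le_copy_deg G e w hwK
    have hup : (H.neighborSet w ∩ insert v S).ncard ≤ G.minDegree := key w hw
    have heq : K.neighborSet w = H.neighborSet w ∩ insert v S :=
      Set.eq_of_subset_of_ncard_le hsub (by omega) (Set.toFinite _)
    refine ⟨heq, le_antisymm ?_ hlow⟩
    rw [heq]; exact hup
  -- Step 5 : P is closed under adjacency inside insert v S
  have hPclosed : ∀ w ∈ P, ∀ x, H.Adj w x → x ∈ insert v S → x ∈ P := by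
    intro w hw x hadj hxin K hK
    have heq := (key2 w hw K hK).1
    have hxK : x ∈ K.neighborSet w := by
      rw [heq]; exact ⟨hadj, hxin⟩
    exact K.neighborSet_subset_verts w hxK
  -- Step 6 : every copy has vertex set exactly P
  have hverts : ∀ K : H.Subgraph, IsCopyIn G H (insert v S) K → K.verts = P := by
    intro K hK
    apply Set.Subset.antisymm
    · obtain ⟨hKsub, ⟨e⟩⟩ := id hK
      have hconn : K.Connected := copy_connected' hGconn e
      have hvK : v ∈ K.verts := hvcopy K hK
      intro x hx
      obtain ⟨p⟩ := hconn.coe ⟨v, hvK⟩ ⟨x, hx⟩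
      have hwalk : ∀ (y z : K.verts), K.coe.Walk y z → (y : V) ∈ P → (z : V) ∈ P := by
        intro y z p
        induction p with
        | nil => exact id
        | @cons y' u' z' h p ih =>
          intro hy
          exact ih (hPclosed _ hy _ (K.adj_sub h) (hKsub u'.2))
      exact hwalk _ _ p hvP
    · intro w hw
      exact hw K hK
  obtain ⟨K, hK⟩ := hex
  have hKP : K.verts = P := hverts K hK
  -- the adjacency of any copy is forced
  have hadjforce : ∀ K' : H.Subgraph, IsCopyIn G H (insert v S) K' →
      ∀ a b, H.Adj a b → a ∈ P → b ∈ insert v S → K'.Adj a b := by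
    intro K' hK' a b hab haP hbin
    have heq := (key2 a haP K' hK').1
    have : b ∈ K'.neighborSet a := by
      rw [heq]; exact ⟨hab, hbin⟩
    exact this
  refine ⟨K, hK, ?_, ?_, ?_, ?_, ?_⟩
  · -- uniqueness
    intro K' hK'
    have hK'P : K'.verts = P := hverts K' hK'
    refine SimpleGraph.Subgraph.ext (hK'P.trans hKP.symm) ?_
    ext a b
    constructor
    · intro h
      exact hadjforce K hK a b (K'.adj_sub h) (hK'P ▸ K'.edge_vert h)
        (hK'.1 (K'.edge_vert h.symm))
    · intro h
      exact hadjforce K' hK' a b (K.adj_sub h) (hKP ▸ K.edge_vert h)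
        (hK.1 (K.edge_vert h.symm))
  · obtain ⟨-, ⟨e⟩⟩ := id hK
    exact copy_connected' hGconn e
  · -- induced
    intro a ha b hb hadj
    exact hadjforce K hK a b hadj (hKP ▸ ha) (hK.1 hb)
  · -- closed under adjacency in insert v S
    intro a ha b hb hadj
    exact K.neighborSet_subset_verts a (hadjforce K hK a b hadj (hKP ▸ ha) hb)
  · -- regular
    intro a ha
    exact (key2 a (hKP ▸ ha) K hK).2
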